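/- Let d > 0, δ > 0 and k ≥ 1 with d - 2k > 0. Suppose nonnegative reals F₁, F₃, F₅, ..., F_{2k+1} (odd indices) and G₀, G₂, ..., G_{2k} satisfy F₁ ≤ (2/δ²)·G₀ and F_{2j+1} ≤ (2/δ²)·(G_{2j} + 2j(d-2j)·F_{2j-1}) for 1 ≤ j ≤ k. Then F_{2k+1} ≤ Σ_{j=0}^{k} (2/δ²)^{k-j+1} · ((2k)!!/(2j)!!) · (d-2k)·(d-2k+2)···(d-2j-2) · G_{2j}, where the product (d-2k)_{k-j,2} = ∏_{i=0}^{k-j-1}(d-2k+2i) is taken to be 1 when j = k, and m!! denotes the double factorial with 0!! = 1. -/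

import Mathlib

open Real Nat

theorem studentT_odd_recursion (d δ : ℝ) (hd : 0 < d) (hδ : 0 < δ) (k : ℕ) (hk : 1 ≤ k)
    (hdk : 0 < d - 2 * k) (F G : ℕ → ℝ)
    (hF : ∀ j ≤ k, 0 ≤ F (2 * j + 1)) (hG : ∀ j ≤ k, 0 ≤ G (2 * j))
    (h1 : F 1 ≤ 2 / δ ^ 2 * G 0)
    (hrec : ∀ j, 1 ≤ j → j ≤ k →
      F (2 * j + 1) ≤ 2 / δ ^ 2 * (G (2 * j) + 2 * j * (d - 2 * j) * F (2 * j - 1))) :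
    F (2 * k + 1) ≤
      ∑ j ∈ Finset.range (k + 1),
        (2 / δ ^ 2) ^ (k - j + 1) * (((2 * k)‼ : ℝ) / ((2 * j)‼ : ℝ)) *
          (∏ i ∈ Finset.range (k - j), (d - 2 * k + 2 * i)) * G (2 * j) := by
  have hdn : ∀ n : ℕ, n ≤ k → 0 < d - 2 * n := by
    intro n hn
    have : (n : ℝ) ≤ k := by exact_mod_cast hn
    nlinarith
  suffices h : ∀ n, n ≤ k → F (2 * n + 1) ≤
      ∑ j ∈ Finset.range (n + 1),
        (2 / δ ^ 2) ^ (n - j + 1) * (((2 * n)‼ : ℝ) / ((2 * j)‼ : ℝ)) *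
          (∏ i ∈ Finset.range (n - j), (d - 2 * n + 2 * i)) * G (2 * j) from h k le_rfl
  intro n
  induction n with
  | zero =>
    intro _
    simpa [Finset.sum_range_one, Nat.doubleFactorial] using h1
  | succ m ih =>
    intro hm
    have hm' : m ≤ k := by omega
    have hS := ih hm'
    have hcnn : (0:ℝ) ≤ 2 * (m + 1 : ℕ) * (d - 2 * (m + 1 : ℕ)) := by
      have := hdn (m + 1) hm
      positivity
    have hFe : F (2 * (m + 1) - 1) = F (2 * m + 1) := by congr 1
    calc F (2 * (m + 1) + 1)
        ≤ 2 / δ ^ 2 * (G (2 * (m + 1)) +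
            2 * (m + 1 : ℕ) * (d - 2 * (m + 1 : ℕ)) * F (2 * (m + 1) - 1)) :=
          hrec (m + 1) (by omega) hm
      _ ≤ 2 / δ ^ 2 * (G (2 * (m + 1)) +
            2 * (m + 1 : ℕ) * (d - 2 * (m + 1 : ℕ)) *
            (∑ j ∈ Finset.range (m + 1),
              (2 / δ ^ 2) ^ (m - j + 1) * (((2 * m)‼ : ℝ) / ((2 * j)‼ : ℝ)) *
                (∏ i ∈ Finset.range (m - j), (d - 2 * m + 2 * i)) * G (2 * j))) := by
          apply mul_le_mul_of_nonneg_left _ (by positivity)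
          apply _root_.add_le_add le_rfl
          rw [hFe]
          exact mul_le_mul_of_nonneg_left hS hcnn
      _ = _ := by
          conv_rhs => rw [Finset.sum_range_succ]
          have hterm : ∀ j ∈ Finset.range (m + 1),
              (2 / δ ^ 2) ^ (m + 1 - j + 1) * (((2 * (m + 1))‼ : ℝ) / ((2 * j)‼ : ℝ)) *
                (∏ i ∈ Finset.range (m + 1 - j), (d - 2 * (m + 1 : ℕ) + 2 * i)) * G (2 * j)
              = 2 / δ ^ 2 * (2 * (m + 1 : ℕ) * (d - 2 * (m + 1 : ℕ))) *
                ((2 / δ ^ 2) ^ (m - j + 1) * (((2 * m)‼ : ℝ) / ((2 * j)‼ : ℝ)) *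
                  (∏ i ∈ Finset.range (m - j), (d - 2 * m + 2 * i)) * G (2 * j)) := by
            intro j hj
            have hjm : j ≤ m := by simpa [Nat.lt_succ_iff] using hj
            have e1 : m + 1 - j = (m - j) + 1 := by omega
            have e2 : 2 * (m + 1) = 2 * m + 2 := by ring
            have e3 : ((2 * (m + 1))‼ : ℝ) = (2 * m + 2) * ((2 * m)‼ : ℝ) := by
              rw [e2, Nat.doubleFactorial_add_two]
              push_cast
              ring
            have e4 : (∏ i ∈ Finset.range (m + 1 - j), (d - 2 * (m + 1 : ℕ) + 2 * i))
                = (∏ i ∈ Finset.range (m - j), (d - 2 * m + 2 * i)) * (d - 2 * (m + 1 : ℕ)) := by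
              rw [e1, Finset.prod_range_succ']
              congr 1
              · apply Finset.prod_congr rfl
                intro i _
                push_cast
                ring
              · push_cast; ring
            rw [e3, e4, e1, pow_succ]
            push_cast
            ring
          rw [Finset.sum_congr rfl hterm, ← Finset.mul_sum]
          have e5 : m + 1 - (m + 1) = 0 := Nat.sub_self _
          have e6 : (((2 * (m + 1))‼ : ℝ) / ((2 * (m + 1))‼ : ℝ)) = 1 := by
            apply div_self
            exact_mod_cast (Nat.doubleFactorial_pos _).ne'
          rw [e5, e6]
          simp only [Finset.range_zero, Finset.prod_empty, pow_one]
          ring
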